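/- Let K be a field with char K ≠ 2 and let 𝔤 be a finitely generated Lie algebra over K. Then the ideal L(𝔤) of χ(𝔤) is finitely generated as a Lie algebra. -/

import Mathlib

/- Formalization of a statement from "Weak commutativity for Lie algebras"
   (arXiv:1808.10303). All Lie algebras are over a fixed field `K` with `char K ≠ 2`. -/

universe u v w

set_option linter.unusedVariables false

section WeakCommutativity

variable (K : Type u) [Field K] (g : Type v) [LieRing g] [LieAlgebra K g]

/-- The image of `x ∈ g` (first copy) in the free Lie algebra on two copies of `g`. -/
noncomputable def ofl (x : g) : FreeLieAlgebra K (g ⊕ g) := FreeLieAlgebra.of K (Sum.inl x)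

/-- The image of `xᵠ ∈ gᵠ` (second copy) in the free Lie algebra on two copies of `g`. -/
noncomputable def ofr (x : g) : FreeLieAlgebra K (g ⊕ g) := FreeLieAlgebra.of K (Sum.inr x)

/-- Relators presenting `χ(g)` as a quotient of the free Lie algebra on the disjoint union of
two copies of (the underlying type of) `g`: the relations presenting the free Lie product
(coproduct) of `g` and its copy `gᵠ`, together with the weak commutativity relations
`⁅x, xᵠ⁆ = 0` for all `x ∈ g`. -/
def chiRelators : Set (FreeLieAlgebra K (g ⊕ g)) :=
  { z | (∃ x y : g, z = ofl K g (x + y) - ofl K g x - ofl K g y)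
      ∨ (∃ (c : K) (x : g), z = ofl K g (c • x) - c • ofl K g x)
      ∨ (∃ x y : g, z = ofl K g ⁅x, y⁆ - ⁅ofl K g x, ofl K g y⁆)
      ∨ (∃ x y : g, z = ofr K g (x + y) - ofr K g x - ofr K g y)
      ∨ (∃ (c : K) (x : g), z = ofr K g (c • x) - c • ofr K g x)
      ∨ (∃ x y : g, z = ofr K g ⁅x, y⁆ - ⁅ofr K g x, ofr K g y⁆)
      ∨ (∃ x : g, z = ⁅ofl K g x, ofr K g x⁆) }

/-- The ideal of relations defining `χ(g)`. -/
noncomputable def chiIdeal : LieIdeal K (FreeLieAlgebra K (g ⊕ g)) :=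
  LieSubmodule.lieSpan K (FreeLieAlgebra K (g ⊕ g)) (chiRelators K g)

/-- Sidki's weak commutativity Lie algebra `χ(g)`: the quotient of the free Lie product of
two isomorphic copies `g`, `gᵠ` of `g` by the ideal generated by the brackets `⁅x, xᵠ⁆`. -/
abbrev chi : Type (max u v) := FreeLieAlgebra K (g ⊕ g) ⧸ chiIdeal K g

/-- The canonical image of `x ∈ g` (first copy) in `χ(g)`. -/
noncomputable def chiι (x : g) : chi K g :=
  LieSubmodule.Quotient.mk (N := chiIdeal K g) (ofl K g x)

/-- The canonical image of `xᵠ` (the second copy of `x ∈ g`) in `χ(g)`. -/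
noncomputable def chiψ (x : g) : chi K g :=
  LieSubmodule.Quotient.mk (N := chiIdeal K g) (ofr K g x)

/-- The ideal `L(g) ⊆ χ(g)`, generated by the elements `x - xᵠ` for `x ∈ g`. -/
noncomputable def chiL : LieIdeal K (chi K g) :=
  LieSubmodule.lieSpan K (chi K g) (Set.range fun x : g => chiι K g x - chiψ K g x)

end WeakCommutativity



section Aux

variable (K : Type u) [Field K] (g : Type v) [LieRing g] [LieAlgebra K g]

/-- The quotient map as a morphism of Lie algebras. -/
noncomputable def chiMk : FreeLieAlgebra K (g ⊕ g) →ₗ⁅K⁆ chi K g :=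
  { (chiIdeal K g).toSubmodule.mkQ with
    map_lie' := fun {_ _} => rfl }

lemma chiMk_apply (z : FreeLieAlgebra K (g ⊕ g)) :
    chiMk K g z = LieSubmodule.Quotient.mk (N := chiIdeal K g) z := rfl

lemma chiMk_rel {r : FreeLieAlgebra K (g ⊕ g)} (h : r ∈ chiRelators K g) :
    chiMk K g r = 0 := by
  rw [chiMk_apply, LieSubmodule.Quotient.mk_eq_zero']
  exact LieSubmodule.subset_lieSpan h

lemma chiι_add (x y : g) : chiι K g (x + y) = chiι K g x + chiι K g y := by
  have h := chiMk_rel K g (Or.inl ⟨x, y, rfl⟩)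
  rw [map_sub, map_sub, sub_sub, sub_eq_zero] at h
  exact h

lemma chiι_smul (c : K) (x : g) : chiι K g (c • x) = c • chiι K g x := by
  have h := chiMk_rel K g (Or.inr (Or.inl ⟨c, x, rfl⟩))
  rw [map_sub, map_smul, sub_eq_zero] at h
  exact h

lemma chiι_bracket (x y : g) : chiι K g ⁅x, y⁆ = ⁅chiι K g x, chiι K g y⁆ := by
  have h := chiMk_rel K g (Or.inr (Or.inr (Or.inl ⟨x, y, rfl⟩)))
  rw [map_sub, LieHom.map_lie, sub_eq_zero] at h
  exact h

lemma chiψ_add (x y : g) : chiψ K g (x + y) = chiψ K g x + chiψ K g y := by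
  have h := chiMk_rel K g (Or.inr (Or.inr (Or.inr (Or.inl ⟨x, y, rfl⟩))))
  rw [map_sub, map_sub, sub_sub, sub_eq_zero] at h
  exact h

lemma chiψ_smul (c : K) (x : g) : chiψ K g (c • x) = c • chiψ K g x := by
  have h := chiMk_rel K g (Or.inr (Or.inr (Or.inr (Or.inr (Or.inl ⟨c, x, rfl⟩)))))
  rw [map_sub, map_smul, sub_eq_zero] at h
  exact h

lemma chiψ_bracket (x y : g) : chiψ K g ⁅x, y⁆ = ⁅chiψ K g x, chiψ K g y⁆ := by
  have h := chiMk_rel K g (Or.inr (Or.inr (Or.inr (Or.inr (Or.inr (Or.inl ⟨x, y, rfl⟩))))))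
  rw [map_sub, LieHom.map_lie, sub_eq_zero] at h
  exact h

lemma chi_wc (x : g) : ⁅chiι K g x, chiψ K g x⁆ = 0 := by
  have h := chiMk_rel K g (Or.inr (Or.inr (Or.inr (Or.inr (Or.inr (Or.inr ⟨x, rfl⟩))))))
  rw [LieHom.map_lie] at h
  exact h

lemma chiι_zero : chiι K g 0 = 0 := by
  simpa using chiι_smul K g 0 0

lemma chiψ_zero : chiψ K g 0 = 0 := by
  simpa using chiψ_smul K g 0 0

lemma chi_wc' (x y : g) : ⁅chiι K g x, chiψ K g y⁆ = -⁅chiι K g y, chiψ K g x⁆ := by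
  have h := chi_wc K g (x + y)
  rw [chiι_add, chiψ_add, add_lie, lie_add, lie_add, chi_wc, chi_wc] at h
  have h' : ⁅chiι K g x, chiψ K g y⁆ + ⁅chiι K g y, chiψ K g x⁆ = 0 := by
    rw [← h]; abel
  exact eq_neg_of_add_eq_zero_left h'

end Aux

section Identities

variable (K : Type u) [Field K] (g : Type v) [LieRing g] [LieAlgebra K g]

/-- `D x = x - xᵠ` in `χ(g)`. -/
noncomputable def chiD (x : g) : chi K g := chiι K g x - chiψ K g x

lemma chiD_add (x y : g) : chiD K g (x + y) = chiD K g x + chiD K g y := by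
  simp only [chiD, chiι_add, chiψ_add]; abel

lemma chiD_smul (c : K) (x : g) : chiD K g (c • x) = c • chiD K g x := by
  simp only [chiD, chiι_smul, chiψ_smul, smul_sub]

lemma chiD_zero : chiD K g 0 = 0 := by
  simp [chiD, chiι_zero, chiψ_zero]

/-- `⁅x, D y⁆ = -⁅y, D x⁆` in `χ(g)`. -/
lemma chi_anti (x y : g) : ⁅chiι K g x, chiD K g y⁆ = -⁅chiι K g y, chiD K g x⁆ := by
  simp only [chiD, lie_sub]
  rw [chi_wc' K g x y, show ⁅chiι K g y, chiι K g x⁆ = -⁅chiι K g x, chiι K g y⁆ by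
    rw [← lie_skew]]
  abel

/-- `D⁅x, y⁆ = 2⁅x, D y⁆ - ⁅D x, D y⁆` in `χ(g)`. -/
lemma chi_Dbr (x y : g) :
    chiD K g ⁅x, y⁆ = (2 : K) • ⁅chiι K g x, chiD K g y⁆ - ⁅chiD K g x, chiD K g y⁆ := by
  simp only [chiD, chiι_bracket, chiψ_bracket, lie_sub, sub_lie]
  rw [show ⁅chiψ K g x, chiι K g y⁆ = ⁅chiι K g x, chiψ K g y⁆ by
    rw [chi_wc' K g x y, ← lie_skew]]
  module

/-- The key identity: `2⁅x, ⁅y, D z⁆⁆ = ⁅⁅x,y⁆, D z⁆ - ⁅⁅x,z⁆, D y⁆ - ⁅⁅y,z⁆, D x⁆`. -/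
lemma chi_key (x y z : g) :
    (2 : K) • ⁅chiι K g x, ⁅chiι K g y, chiD K g z⁆⁆
      = ⁅chiι K g ⁅x, y⁆, chiD K g z⁆ - ⁅chiι K g ⁅x, z⁆, chiD K g y⁆
        - ⁅chiι K g ⁅y, z⁆, chiD K g x⁆ := by
  rw [chiι_bracket, chiι_bracket, chiι_bracket, lie_lie, lie_lie, lie_lie,
    chi_anti K g z y, chi_anti K g z x, chi_anti K g y x]
  simp only [lie_neg]
  module

/-- The derived identity used for the symmetry of `⁅x, ⁅y, D z⁆⁆` modulo brackets of
elements of `L`. -/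
lemma chi_keyB (x y z : g) :
    (2 : K) • (⁅chiι K g z, ⁅chiι K g x, chiD K g y⁆⁆ - ⁅chiι K g y, ⁅chiι K g x, chiD K g z⁆⁆)
      = ⁅chiι K g z, ⁅chiD K g x, chiD K g y⁆⁆ - ⁅chiι K g y, ⁅chiD K g x, chiD K g z⁆⁆
        - ⁅chiι K g x, ⁅chiD K g y, chiD K g z⁆⁆ := by
  have t1 : ⁅chiι K g ⁅x, y⁆, chiD K g z⁆
      = ⁅chiι K g z, ⁅chiD K g x, chiD K g y⁆⁆
        - (2 : K) • ⁅chiι K g z, ⁅chiι K g x, chiD K g y⁆⁆ := by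
    rw [chi_anti K g ⁅x, y⁆ z, chi_Dbr, lie_sub, lie_smul]; module
  have t2 : ⁅chiι K g ⁅x, z⁆, chiD K g y⁆
      = ⁅chiι K g y, ⁅chiD K g x, chiD K g z⁆⁆
        - (2 : K) • ⁅chiι K g y, ⁅chiι K g x, chiD K g z⁆⁆ := by
    rw [chi_anti K g ⁅x, z⁆ y, chi_Dbr, lie_sub, lie_smul]; module
  have t3 : ⁅chiι K g ⁅y, z⁆, chiD K g x⁆
      = ⁅chiι K g x, ⁅chiD K g y, chiD K g z⁆⁆
        - (2 : K) • ⁅chiι K g x, ⁅chiι K g y, chiD K g z⁆⁆ := by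
    rw [chi_anti K g ⁅y, z⁆ x, chi_Dbr, lie_sub, lie_smul]; module
  have e := chi_key K g x y z
  rw [t1, t2, t3] at e
  have h0 := sub_eq_zero_of_eq e
  have h1 : (2 : K) • (⁅chiι K g z, ⁅chiι K g x, chiD K g y⁆⁆
        - ⁅chiι K g y, ⁅chiι K g x, chiD K g z⁆⁆)
      - (⁅chiι K g z, ⁅chiD K g x, chiD K g y⁆⁆ - ⁅chiι K g y, ⁅chiD K g x, chiD K g z⁆⁆
        - ⁅chiι K g x, ⁅chiD K g y, chiD K g z⁆⁆)
      = ((2 : K) • ⁅chiι K g x, ⁅chiι K g y, chiD K g z⁆⁆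
        - ((⁅chiι K g z, ⁅chiD K g x, chiD K g y⁆⁆
            - (2 : K) • ⁅chiι K g z, ⁅chiι K g x, chiD K g y⁆⁆)
          - (⁅chiι K g y, ⁅chiD K g x, chiD K g z⁆⁆
            - (2 : K) • ⁅chiι K g y, ⁅chiι K g x, chiD K g z⁆⁆)
          - (⁅chiι K g x, ⁅chiD K g y, chiD K g z⁆⁆
            - (2 : K) • ⁅chiι K g x, ⁅chiι K g y, chiD K g z⁆⁆))) := by
    module
  rw [h0] at h1
  exact sub_eq_zero.mp h1

end Identities

section Span

variable (K : Type u) [Field K]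

/-- A free Lie algebra is generated by its canonical generators. -/
lemma freeLie_mem_span (X : Type w) (z : FreeLieAlgebra K X) :
    z ∈ LieSubalgebra.lieSpan K (FreeLieAlgebra K X) (Set.range (FreeLieAlgebra.of K)) := by
  set S := LieSubalgebra.lieSpan K (FreeLieAlgebra K X) (Set.range (FreeLieAlgebra.of K)) with hS
  let f : FreeLieAlgebra K X →ₗ⁅K⁆ S :=
    FreeLieAlgebra.lift K fun a => (⟨FreeLieAlgebra.of K a,
      LieSubalgebra.subset_lieSpan ⟨a, rfl⟩⟩ : S)
  have h : S.incl.comp f = LieHom.id := by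
    apply FreeLieAlgebra.hom_ext
    intro a
    simp [f, FreeLieAlgebra.lift_of_apply]
  have h' : S.incl (f z) = z := by
    have := congrArg (fun F : FreeLieAlgebra K X →ₗ⁅K⁆ FreeLieAlgebra K X => F z) h
    simpa using this
  rw [← h']
  exact (f z).2

variable (g : Type v) [LieRing g] [LieAlgebra K g]

/-- If a Lie subalgebra of `χ(g)` is invariant under bracketing by the images of both copies
of `g`, then it is invariant under bracketing by everything. -/
lemma chi_lie_closed (B : LieSubalgebra K (chi K g))
    (hι : ∀ (x : g), ∀ b ∈ B, ⁅chiι K g x, b⁆ ∈ B)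
    (hψ : ∀ (x : g), ∀ b ∈ B, ⁅chiψ K g x, b⁆ ∈ B) :
    ∀ (c : chi K g), ∀ b ∈ B, ⁅c, b⁆ ∈ B := by
  intro c
  obtain ⟨z, rfl⟩ : ∃ z, chiMk K g z = c :=
    LieSubmodule.Quotient.surjective_mk' (chiIdeal K g) c
  have hz := freeLie_mem_span K (g ⊕ g) z
  refine LieSubalgebra.lieSpan_induction (R := K) (p := fun z _ =>
      ∀ b ∈ B, ⁅chiMk K g z, b⁆ ∈ B) ?_ ?_ ?_ ?_ ?_ hz
  · rintro _ ⟨a, rfl⟩ b hb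
    cases a with
    | inl x => exact hι x b hb
    | inr x => exact hψ x b hb
  · intro b hb
    rw [map_zero, zero_lie]
    exact B.zero_mem
  · intro x y _ _ hx hy b hb
    rw [map_add, add_lie]
    exact B.add_mem (hx b hb) (hy b hb)
  · intro r x _ hx b hb
    rw [map_smul, smul_lie]
    exact B.smul_mem r (hx b hb)
  · intro x y _ _ hx hy b hb
    rw [LieHom.map_lie, lie_lie]
    exact B.sub_mem (hx _ (hy b hb)) (hy _ (hx b hb))

end Span

section Membership

variable (K : Type u) [Field K] (g : Type v) [LieRing g] [LieAlgebra K g]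

lemma chi_P_mem (htwo : (2 : K) ≠ 0) (s : Finset g) (B : LieSubalgebra K (chi K g))
    (h1 : ∀ x ∈ s, chiD K g x ∈ B)
    (h2 : ∀ x ∈ s, ∀ y ∈ s, ⁅chiι K g x, chiD K g y⁆ ∈ B) :
    ∀ x ∈ s, ∀ y ∈ s, ∀ z ∈ s, ⁅chiι K g x, ⁅chiι K g y, chiD K g z⁆⁆ ∈ B := by
  have half : ∀ a : chi K g, (2 : K) • a ∈ B → a ∈ B := by
    intro a ha
    have := B.smul_mem ((2 : K)⁻¹) ha
    rwa [smul_smul, inv_mul_cancel₀ htwo, one_smul] at this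
  have hP0 : ∀ x ∈ s, ∀ y ∈ s, ∀ z ∈ s, ⁅chiι K g x, ⁅chiD K g y, chiD K g z⁆⁆ ∈ B := by
    intro x hx y hy z hz
    rw [leibniz_lie]
    exact B.add_mem (B.lie_mem (h2 x hx y hy) (h1 z hz)) (B.lie_mem (h1 y hy) (h2 x hx z hz))
  have relA : ∀ a ∈ s, ∀ b ∈ s, ∀ c ∈ s,
      ⁅chiι K g a, ⁅chiι K g b, chiD K g c⁆⁆ - ⁅chiι K g c, ⁅chiι K g b, chiD K g a⁆⁆ ∈ B := by
    intro a ha b hb c hc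
    apply half
    rw [chi_keyB K g b c a]
    exact B.sub_mem (B.sub_mem (hP0 a ha b hb c hc) (hP0 c hc b hb a ha)) (hP0 b hb c hc a ha)
  have antiP : ∀ a b c : g,
      ⁅chiι K g a, ⁅chiι K g b, chiD K g c⁆⁆ = -⁅chiι K g a, ⁅chiι K g c, chiD K g b⁆⁆ := by
    intro a b c
    rw [chi_anti K g c b, lie_neg, neg_neg]
  intro x hx y hy z hz
  have b1 := relA x hx y hy z hz
  have b2 := relA z hz x hx y hy
  have b3 := relA y hy z hz x hx
  have hsum : (2 : K) • ⁅chiι K g x, ⁅chiι K g y, chiD K g z⁆⁆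
      = (⁅chiι K g x, ⁅chiι K g y, chiD K g z⁆⁆ - ⁅chiι K g z, ⁅chiι K g y, chiD K g x⁆⁆)
        - (⁅chiι K g z, ⁅chiι K g x, chiD K g y⁆⁆ - ⁅chiι K g y, ⁅chiι K g x, chiD K g z⁆⁆)
        + (⁅chiι K g y, ⁅chiι K g z, chiD K g x⁆⁆ - ⁅chiι K g x, ⁅chiι K g z, chiD K g y⁆⁆) := by
    rw [antiP z y x, antiP y x z, antiP x z y]
    module
  apply half
  rw [hsum]
  exact B.add_mem (B.sub_mem b1 b2) b3

end Membership


set_option maxHeartbeats 1000000 in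
/-- If `g` is finitely generated, then the ideal `L(g)` of `χ(g)` is
finitely generated as a Lie algebra. -/
theorem chi_L_finitelyGenerated
    (K : Type u) [Field K] (hchar : ringChar K ≠ 2)
    (g : Type v) [LieRing g] [LieAlgebra K g]
    (hfg : ∃ s : Finset g, LieSubalgebra.lieSpan K g (s : Set g) = ⊤) :
    ∃ t : Finset (chi K g),
      ((LieSubalgebra.lieSpan K (chi K g) (t : Set (chi K g))) : Set (chi K g))
        = (chiL K g : Set (chi K g)) := by
  obtain ⟨s, hs⟩ := hfg
  have htwo : (2 : K) ≠ 0 := by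
    intro h
    have h2 : ((2 : ℕ) : K) = 0 := by exact_mod_cast h
    have hd : ringChar K ∣ 2 := (ringChar.spec K 2).mp h2
    rcases (Nat.dvd_prime Nat.prime_two).1 hd with h1 | h1
    · have : ((ringChar K : ℕ) : K) = 0 := CharP.cast_eq_zero K (ringChar K)
      rw [h1] at this
      simpa using this
    · exact hchar h1
  classical
  set t : Finset (chi K g) := s.image (chiD K g) ∪
      (s ×ˢ s).image (fun p => ⁅chiι K g p.1, chiD K g p.2⁆) with ht
  set B := LieSubalgebra.lieSpan K (chi K g) (t : Set (chi K g)) with hB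
  have hmemt : ∀ a ∈ t, a ∈ B := fun a ha => LieSubalgebra.subset_lieSpan ha
  have hDt : ∀ x ∈ s, chiD K g x ∈ B := by
    intro x hx
    exact hmemt _ (Finset.mem_union_left _ (Finset.mem_image_of_mem _ hx))
  have hbt : ∀ x ∈ s, ∀ y ∈ s, ⁅chiι K g x, chiD K g y⁆ ∈ B := by
    intro x hx y hy
    refine hmemt _ (Finset.mem_union_right _ ?_)
    exact Finset.mem_image.mpr ⟨(x, y), Finset.mem_product.mpr ⟨hx, hy⟩, rfl⟩
  have half : ∀ a : chi K g, (2 : K) • a ∈ B → a ∈ B := by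
    intro a ha
    have := B.smul_mem ((2 : K)⁻¹) ha
    rwa [smul_smul, inv_mul_cancel₀ htwo, one_smul] at this
  have hP := chi_P_mem K g htwo s B hDt hbt
  -- Every generator x ∈ s brackets B into B.
  have hgen : ∀ x ∈ s, ∀ b ∈ B, ⁅chiι K g x, b⁆ ∈ B := by
    intro x hx b hb
    refine (LieSubalgebra.lieSpan_induction (R := K)
      (p := fun b _ => b ∈ B ∧ ⁅chiι K g x, b⁆ ∈ B) ?_ ?_ ?_ ?_ ?_ hb).2
    · intro a ha
      rw [Finset.mem_coe, ht, Finset.mem_union] at ha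
      rcases ha with ha | ha
      · obtain ⟨y, hy, rfl⟩ := Finset.mem_image.mp ha
        exact ⟨hDt y hy, hbt x hx y hy⟩
      · obtain ⟨⟨y, z⟩, hyz, rfl⟩ := Finset.mem_image.mp ha
        obtain ⟨hy, hz⟩ := Finset.mem_product.mp hyz
        exact ⟨hbt y hy z hz, hP x hx y hy z hz⟩
    · exact ⟨B.zero_mem, by rw [lie_zero]; exact B.zero_mem⟩
    · intro a b _ _ ha hb
      exact ⟨B.add_mem ha.1 hb.1, by rw [lie_add]; exact B.add_mem ha.2 hb.2⟩
    · intro r a _ ha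
      exact ⟨B.smul_mem r ha.1, by rw [lie_smul]; exact B.smul_mem r ha.2⟩
    · intro a b _ _ ha hb
      refine ⟨B.lie_mem ha.1 hb.1, ?_⟩
      rw [leibniz_lie]
      exact B.add_mem (B.lie_mem ha.2 hb.1) (B.lie_mem ha.1 hb.2)
  -- The set of x ∈ g with D x ∈ B and ⁅x, B⁆ ⊆ B is a Lie subalgebra of g.
  let C : LieSubalgebra K g :=
    { carrier := {x : g | chiD K g x ∈ B ∧ ∀ b ∈ B, ⁅chiι K g x, b⁆ ∈ B}
      add_mem' := by
        intro x y hx hy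
        refine ⟨by rw [chiD_add]; exact B.add_mem hx.1 hy.1, ?_⟩
        intro b hb
        rw [chiι_add, add_lie]
        exact B.add_mem (hx.2 b hb) (hy.2 b hb)
      zero_mem' := ⟨by rw [chiD_zero]; exact B.zero_mem, by
        intro b hb
        rw [chiι_zero, zero_lie]
        exact B.zero_mem⟩
      smul_mem' := by
        intro c x hx
        refine ⟨by rw [chiD_smul]; exact B.smul_mem c hx.1, ?_⟩
        intro b hb
        rw [chiι_smul, smul_lie]
        exact B.smul_mem c (hx.2 b hb)
      lie_mem' := by
        intro x y hx hy
        refine ⟨?_, ?_⟩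
        · rw [chi_Dbr]
          exact B.sub_mem (B.smul_mem _ (hx.2 _ hy.1)) (B.lie_mem hx.1 hy.1)
        · intro b hb
          rw [chiι_bracket, lie_lie]
          exact B.sub_mem (hx.2 _ (hy.2 b hb)) (hy.2 _ (hx.2 b hb)) }
  have hsC : (s : Set g) ⊆ C := fun x hx => ⟨hDt x hx, hgen x hx⟩
  have hCtop : ∀ x : g, chiD K g x ∈ B ∧ ∀ b ∈ B, ⁅chiι K g x, b⁆ ∈ B := by
    intro x
    have hle : (⊤ : LieSubalgebra K g) ≤ C := hs ▸ LieSubalgebra.lieSpan_le.mpr hsC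
    exact hle (LieSubalgebra.mem_top x)
  have hψlie : ∀ (x : g), ∀ b ∈ B, ⁅chiψ K g x, b⁆ ∈ B := by
    intro x b hb
    have hψeq : chiψ K g x = chiι K g x - chiD K g x := by rw [chiD]; abel
    rw [hψeq, sub_lie]
    exact B.sub_mem ((hCtop x).2 b hb) (B.lie_mem (hCtop x).1 hb)
  have hideal := chi_lie_closed K g B (fun x => (hCtop x).2) hψlie
  let N : LieIdeal K (chi K g) :=
    { B.toSubmodule with lie_mem := fun {c m} hm => hideal c m hm }
  have hLN : chiL K g ≤ N := by
    rw [chiL]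
    refine LieSubmodule.lieSpan_le.mpr ?_
    rintro _ ⟨x, rfl⟩
    exact (hCtop x).1
  have hBL : ∀ b ∈ B, b ∈ chiL K g := by
    intro b hb
    refine LieSubalgebra.lieSpan_induction (R := K) (p := fun b _ => b ∈ chiL K g) ?_ ?_ ?_ ?_ ?_ hb
    · intro a ha
      rw [Finset.mem_coe, ht, Finset.mem_union] at ha
      rcases ha with ha | ha
      · obtain ⟨y, hy, rfl⟩ := Finset.mem_image.mp ha
        exact LieSubmodule.subset_lieSpan ⟨y, rfl⟩
      · obtain ⟨⟨y, z⟩, hyz, rfl⟩ := Finset.mem_image.mp ha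
        exact (chiL K g).lie_mem (LieSubmodule.subset_lieSpan ⟨z, rfl⟩)
    · exact (chiL K g).zero_mem
    · intro a b _ _ ha hb
      exact (chiL K g).add_mem ha hb
    · intro r a _ ha
      exact (chiL K g).smul_mem r ha
    · intro a b _ _ ha hb
      exact (chiL K g).lie_mem hb
  refine ⟨t, ?_⟩
  apply Set.Subset.antisymm
  · intro b hb
    exact hBL b hb
  · intro b hb
    exact hLN hb
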